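/- If p is a polynomial in three variables over ℂ such that p(tr(x₁), tr(x₂), tr(x₁x₂⁻¹)) = 0 for all x₁, x₂ ∈ SL(2,ℂ), then p = 0. -/

import Mathlib

open Matrix

/-- If a polynomial in three variables vanishes on all triples
`(tr x₁, tr x₂, tr(x₁x₂⁻¹))` with `x₁, x₂ ∈ SL(2,ℂ)`, then it is zero. -/
theorem trace_polynomial_relations_trivial (p : MvPolynomial (Fin 3) ℂ)
    (h : ∀ x₁ x₂ : Matrix.SpecialLinearGroup (Fin 2) ℂ,
      MvPolynomial.eval
        ![Matrix.trace (x₁ : Matrix (Fin 2) (Fin 2) ℂ),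
          Matrix.trace (x₂ : Matrix (Fin 2) (Fin 2) ℂ),
          Matrix.trace ((x₁ * x₂⁻¹ : Matrix.SpecialLinearGroup (Fin 2) ℂ) :
            Matrix (Fin 2) (Fin 2) ℂ)] p = 0) :
    p = 0 := by
  have key : ∀ x : Fin 3 → ℂ, MvPolynomial.eval x p = 0 := by
    intro x
    set a := x 0
    set b := x 1
    set c := x 2
    set t : ℂ := a * b - c with ht
    -- find ζ with ζ² - tζ + 1 = 0
    obtain ⟨s, hs⟩ := IsAlgClosed.exists_pow_nat_eq (k := ℂ) (t ^ 2 - 4) (n := 2) (by norm_num)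
    set ζ : ℂ := (t + s) / 2 with hζ
    set η : ℂ := t - ζ with hη
    have hmul : ζ * η = 1 := by
      have : s ^ 2 = t ^ 2 - 4 := hs
      field_simp [hζ, hη]
      ring_nf
      ring_nf at this
      linear_combination (-1/4) * this
    have hx₁ : (!![a, -1; 1, 0] : Matrix (Fin 2) (Fin 2) ℂ).det = 1 := by
      simp [Matrix.det_fin_two_of]
    have hx₂ : (!![(0:ℂ), ζ; -η, b] : Matrix (Fin 2) (Fin 2) ℂ).det = 1 := by
      simp [Matrix.det_fin_two_of, hmul]
    set y₁ : Matrix.SpecialLinearGroup (Fin 2) ℂ := ⟨_, hx₁⟩ with hy₁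
    set y₂ : Matrix.SpecialLinearGroup (Fin 2) ℂ := ⟨_, hx₂⟩ with hy₂
    have hz := h y₁ y₂
    have hinv : ((y₂⁻¹ : Matrix.SpecialLinearGroup (Fin 2) ℂ) :
        Matrix (Fin 2) (Fin 2) ℂ) = !![b, -ζ; η, 0] := by
      rw [Matrix.SpecialLinearGroup.coe_inv, hy₂]
      simp [Matrix.adjugate_fin_two_of]
    have hvec : ![((y₁ : Matrix (Fin 2) (Fin 2) ℂ)).trace,
        ((y₂ : Matrix (Fin 2) (Fin 2) ℂ)).trace,
        ((y₁ * y₂⁻¹ : Matrix.SpecialLinearGroup (Fin 2) ℂ) :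
          Matrix (Fin 2) (Fin 2) ℂ).trace] = x := by
      funext i
      fin_cases i <;>
        simp [Matrix.SpecialLinearGroup.coe_mul, hinv, hy₁, hy₂, Matrix.trace_fin_two,
          Matrix.mul_apply, Fin.sum_univ_two]
      · rfl
      · rfl
      change ((y₁ * y₂⁻¹ : Matrix.SpecialLinearGroup (Fin 2) ℂ) : Matrix (Fin 2) (Fin 2) ℂ) 0 0 +
        ((y₁ * y₂⁻¹ : Matrix.SpecialLinearGroup (Fin 2) ℂ) : Matrix (Fin 2) (Fin 2) ℂ) 1 1 = c
      rw [Matrix.SpecialLinearGroup.coe_mul, hinv]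
      simp [hy₁, Matrix.mul_apply, Fin.sum_univ_two]
      show a * b + -η + -ζ = c
      rw [hη, ht]; ring
    rw [hvec] at hz
    exact hz
  exact MvPolynomial.funext (fun x => by simpa using key x)
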